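/- Let p > 3 be a prime and let G = Φ₁₈(1⁶) be the group of order p⁶ with presentation on generators α, α₁, α₂, α₃, β, γ and relations [α₁,α] = α₂, [α₂,α] = α₃, [α₁,β] = α₃, [α,β] = γ, αᵖ = βᵖ = α₁ᵖ = α₂ᵖ = α₃ᵖ = γᵖ = 1, with every commutator of a pair of generators not listed among these relations declared trivial. Then the Bogomolov multiplier B₀(G) is nontrivial. -/

import Mathlib

/-!
Φ₁₈(1⁶): relations [α₁,α]=α₂, [α₂,α]=α₃, [α₁,β]=α₃, [α,β]=γ, all pth powers trivial.
The Bogomolov multiplier is nontrivial.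
-/

namespace Stmt18

/-- The additive group `ℚ/ℤ`. -/
abbrev QZ : Type := ℚ ⧸ AddSubgroup.zmultiples (1 : ℚ)

/-- An inhomogeneous 2-cocycle on `G` with values in `ℚ/ℤ` (trivial `G`-action). -/
def IsTwoCocycle {G : Type} [Group G] (f : G → G → QZ) : Prop :=
  ∀ g h j : G, f h j - f (g * h) j + f g (h * j) - f g h = 0

/-- An inhomogeneous 2-coboundary on `G` with values in `ℚ/ℤ` (trivial `G`-action). -/
def IsTwoCoboundary {G : Type} [Group G] (f : G → G → QZ) : Prop :=
  ∃ c : G → QZ, ∀ g h : G, f g h = c h - c (g * h) + c g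

/-- A subgroup is bicyclic if it is abelian and generated by at most two elements
(equivalently, cyclic or a direct product of two cyclic groups). -/
def IsBicyclic {G : Type} [Group G] (A : Subgroup G) : Prop :=
  (∀ x y : A, x * y = y * x) ∧ ∃ a b : G, A = Subgroup.closure {a, b}

/-- The Bogomolov multiplier `B₀(G) ⊆ H²(G, ℚ/ℤ)` is trivial, phrased at the level of
2-cocycles: every 2-cocycle whose restriction to each bicyclic subgroup is a coboundary
(i.e. whose class restricts to zero on each bicyclic subgroup) is itself a coboundary
(i.e. its class is zero). -/
def BogomolovMultiplierIsTrivial (G : Type) [Group G] : Prop :=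
  ∀ f : G → G → QZ, IsTwoCocycle f →
    (∀ A : Subgroup G, IsBicyclic A → IsTwoCoboundary (fun a b : ↥A => f ↑a ↑b)) →
    IsTwoCoboundary f

/-- The Bogomolov multiplier `B₀(G) ⊆ H²(G, ℚ/ℤ)` is nontrivial, phrased at the level of
2-cocycles. -/
def BogomolovMultiplierIsNontrivial (G : Type) [Group G] : Prop :=
  ∃ f : G → G → QZ, IsTwoCocycle f ∧
    (∀ A : Subgroup G, IsBicyclic A → IsTwoCoboundary (fun a b : ↥A => f ↑a ↑b)) ∧
    ¬ IsTwoCoboundary f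

/-- The generators. -/
inductive Gen | a | a1 | a2 | a3 | b | g

open FreeGroup

/-- The commutator `[x,y] = x⁻¹y⁻¹xy`. -/
def c (x y : FreeGroup Gen) : FreeGroup Gen := x⁻¹ * y⁻¹ * x * y

/-- The defining relators. -/
def rels (p : ℕ) : Set (FreeGroup Gen) :=
  { c (of .a1) (of .a) * (of Gen.a2)⁻¹,
    c (of .a2) (of .a) * (of Gen.a3)⁻¹,
    c (of .a1) (of .b) * (of Gen.a3)⁻¹,
    c (of .a) (of .b) * (of Gen.g)⁻¹,
    c (of .a) (of .a3),
    c (of .a) (of .g),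
    c (of .a1) (of .a2),
    c (of .a1) (of .a3),
    c (of .a1) (of .g),
    c (of .a2) (of .a3),
    c (of .a2) (of .b),
    c (of .a2) (of .g),
    c (of .a3) (of .b),
    c (of .a3) (of .g),
    c (of .b) (of .g),
    (of Gen.a) ^ p,
    (of Gen.a1) ^ p,
    (of Gen.a2) ^ p,
    (of Gen.a3) ^ p,
    (of Gen.b) ^ p,
    (of Gen.g) ^ p }

/-! ### An explicit model of the group, with a distinguished 2-cocycle. -/

section Model
variable (p : ℕ)

/-- Model of the group of order `p^6`: normal form `α^i β^j α₁^k α₂^l α₃^m γ^n`. -/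
structure M where
  i : ZMod p
  j : ZMod p
  k : ZMod p
  l : ZMod p
  m : ZMod p
  n : ZMod p

variable {p}

instance : One (M p) := ⟨⟨0,0,0,0,0,0⟩⟩
instance : Mul (M p) :=
  ⟨fun x y => ⟨x.i + y.i, x.j + y.j, x.k + y.k, x.l + y.l + x.k * y.i,
    x.m + y.m + x.k * y.j + x.k * (y.i * (y.i - 1)) * (2 : ZMod p)⁻¹ + x.l * y.i,
    x.n + y.n - x.j * y.i⟩⟩
instance : Inv (M p) :=
  ⟨fun x => ⟨-x.i, -x.j, -x.k, -x.l + x.k * x.i,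
    -x.m + x.k * x.j - x.k * (x.i * (x.i + 1)) * (2 : ZMod p)⁻¹ + x.l * x.i,
    -x.n - x.j * x.i⟩⟩

lemma mul_def (x y : M p) : x * y =
    ⟨x.i + y.i, x.j + y.j, x.k + y.k, x.l + y.l + x.k * y.i,
    x.m + y.m + x.k * y.j + x.k * (y.i * (y.i - 1)) * (2 : ZMod p)⁻¹ + x.l * y.i,
    x.n + y.n - x.j * y.i⟩ := rfl

lemma inv_def (x : M p) : x⁻¹ =
    ⟨-x.i, -x.j, -x.k, -x.l + x.k * x.i,
    -x.m + x.k * x.j - x.k * (x.i * (x.i + 1)) * (2 : ZMod p)⁻¹ + x.l * x.i,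
    -x.n - x.j * x.i⟩ := rfl

lemma one_def : (1 : M p) = ⟨0,0,0,0,0,0⟩ := rfl

variable [Fact p.Prime] [Fact (3 < p)]

lemma two_ne_zero' : (2 : ZMod p) ≠ 0 := by
  have h3 : 3 < p := Fact.out
  have : ((2 : ℕ) : ZMod p) ≠ 0 := by
    rw [Ne, ZMod.natCast_eq_zero_iff]
    intro h
    exact absurd (Nat.le_of_dvd (by norm_num) h) (by omega)
  simpa using this

instance : Group (M p) :=
  Group.ofLeftAxioms
    (by
      have h2 : (2 : ZMod p) ≠ 0 := two_ne_zero'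
      intro a b c
      simp only [mul_def, M.mk.injEq]
      refine ⟨by ring, by ring, by ring, by ring, ?_, by ring⟩
      field_simp
      ring)
    (by
      intro a
      obtain ⟨i,j,k,l,m,n⟩ := a
      simp only [one_def, mul_def, M.mk.injEq]
      exact ⟨by ring, by ring, by ring, by ring, by ring, by ring⟩)
    (by
      have h2 : (2 : ZMod p) ≠ 0 := two_ne_zero'
      intro a
      simp only [inv_def, mul_def, one_def, M.mk.injEq]
      refine ⟨by ring, by ring, by ring, by ring, ?_, by ring⟩
      field_simp
      ring)

/-- Images of the generators in the model. -/
def gg : Gen → M p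
  | .a  => ⟨1,0,0,0,0,0⟩
  | .b  => ⟨0,1,0,0,0,0⟩
  | .a1 => ⟨0,0,1,0,0,0⟩
  | .a2 => ⟨0,0,0,1,0,0⟩
  | .a3 => ⟨0,0,0,0,1,0⟩
  | .g  => ⟨0,0,0,0,0,1⟩

lemma powA (t : ℕ) : (⟨1,0,0,0,0,0⟩ : M p) ^ t = ⟨(t : ZMod p),0,0,0,0,0⟩ := by
  induction t with
  | zero => simp [one_def]
  | succ t ih =>
    rw [pow_succ, ih, mul_def]
    simp only [M.mk.injEq]
    push_cast
    exact ⟨by ring, by ring, by ring, by ring, by ring, by ring⟩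

lemma powB (t : ℕ) : (⟨0,1,0,0,0,0⟩ : M p) ^ t = ⟨0,(t : ZMod p),0,0,0,0⟩ := by
  induction t with
  | zero => simp [one_def]
  | succ t ih =>
    rw [pow_succ, ih, mul_def]
    simp only [M.mk.injEq]
    push_cast
    exact ⟨by ring, by ring, by ring, by ring, by ring, by ring⟩

lemma powA1 (t : ℕ) : (⟨0,0,1,0,0,0⟩ : M p) ^ t = ⟨0,0,(t : ZMod p),0,0,0⟩ := by
  induction t with
  | zero => simp [one_def]
  | succ t ih =>
    rw [pow_succ, ih, mul_def]
    simp only [M.mk.injEq]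
    push_cast
    exact ⟨by ring, by ring, by ring, by ring, by ring, by ring⟩

lemma powA2 (t : ℕ) : (⟨0,0,0,1,0,0⟩ : M p) ^ t = ⟨0,0,0,(t : ZMod p),0,0⟩ := by
  induction t with
  | zero => simp [one_def]
  | succ t ih =>
    rw [pow_succ, ih, mul_def]
    simp only [M.mk.injEq]
    push_cast
    exact ⟨by ring, by ring, by ring, by ring, by ring, by ring⟩

lemma powA3 (t : ℕ) : (⟨0,0,0,0,1,0⟩ : M p) ^ t = ⟨0,0,0,0,(t : ZMod p),0⟩ := by
  induction t with
  | zero => simp [one_def]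
  | succ t ih =>
    rw [pow_succ, ih, mul_def]
    simp only [M.mk.injEq]
    push_cast
    exact ⟨by ring, by ring, by ring, by ring, by ring, by ring⟩

lemma powG (t : ℕ) : (⟨0,0,0,0,0,1⟩ : M p) ^ t = ⟨0,0,0,0,0,(t : ZMod p)⟩ := by
  induction t with
  | zero => simp [one_def]
  | succ t ih =>
    rw [pow_succ, ih, mul_def]
    simp only [M.mk.injEq]
    push_cast
    exact ⟨by ring, by ring, by ring, by ring, by ring, by ring⟩

lemma rels_hold : ∀ r ∈ rels p, FreeGroup.lift (gg (p := p)) r = 1 := by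
  have h2 : (2 : ZMod p) ≠ 0 := two_ne_zero'
  intro r hr
  simp only [rels, Set.mem_insert_iff, Set.mem_singleton_iff] at hr
  rcases hr with rfl|rfl|rfl|rfl|rfl|rfl|rfl|rfl|rfl|rfl|rfl|rfl|rfl|rfl|rfl|rfl|rfl|rfl|rfl|rfl|rfl <;>
    simp only [c, _root_.map_mul, _root_.map_inv, _root_.map_pow, FreeGroup.lift_apply_of, gg] <;>
    first
      | (rw [powA (p := p) p, ZMod.natCast_self]; rfl)
      | (rw [powB (p := p) p, ZMod.natCast_self]; rfl)
      | (rw [powA1 (p := p) p, ZMod.natCast_self]; rfl)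
      | (rw [powA2 (p := p) p, ZMod.natCast_self]; rfl)
      | (rw [powA3 (p := p) p, ZMod.natCast_self]; rfl)
      | (rw [powG (p := p) p, ZMod.natCast_self]; rfl)
      | (simp only [inv_def, mul_def, one_def, M.mk.injEq];
         all_goals and_intros
         all_goals first
             | ring1
             | (field_simp; try ring1))

/-- The distinguished `ZMod p`-valued function (a 2-cocycle for the model). -/
def Fm (x y : M p) : ZMod p :=
  x.k * (y.i * (y.i - 1)) * (2 : ZMod p)⁻¹ + x.l * y.i

lemma Fm_cocycle (g h j : M p) :
    Fm h j - Fm (g * h) j + Fm g (h * j) - Fm g h = 0 := by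
  have h2 : (2 : ZMod p) ≠ 0 := two_ne_zero'
  simp only [Fm, mul_def]
  field_simp
  ring

lemma Fm_symm {x y : M p} (hxy : x * y = y * x) : Fm x y = Fm y x := by
  obtain ⟨x1,x2,x3,x4,x5,x6⟩ := x
  obtain ⟨y1,y2,y3,y4,y5,y6⟩ := y
  rw [mul_def, mul_def, M.mk.injEq] at hxy
  obtain ⟨-, -, -, hA, hB, hC⟩ := hxy
  have hA' : x3 * y1 = y3 * x1 := by linear_combination hA
  have hC' : x2 * y1 = y2 * x1 := by linear_combination -hC
  have hD : x3 * y2 = y3 * x2 := by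
    by_cases hx : x1 = 0
    · by_cases hy : y1 = 0
      · subst hx; subst hy
        linear_combination hB
      · have h3 : x3 = 0 := by
          rcases mul_eq_zero.mp (by rw [hA', hx, mul_zero] : x3 * y1 = 0) with h | h
          · exact h
          · exact absurd h hy
        have h2' : x2 = 0 := by
          rcases mul_eq_zero.mp (by rw [hC', hx, mul_zero] : x2 * y1 = 0) with h | h
          · exact h
          · exact absurd h hy
        rw [h3, h2']
        ring
    · have key : x3 * y2 * (x1 * y1) = y3 * x2 * (x1 * y1) := by
        linear_combination (y2 * x1) * hA' - (y3 * x1) * hC'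
      by_cases hy : y1 = 0
      · have h3 : y3 = 0 := by
          rcases mul_eq_zero.mp (by rw [← hA', hy, mul_zero] : y3 * x1 = 0) with h | h
          · exact h
          · exact absurd h hx
        have h2' : y2 = 0 := by
          rcases mul_eq_zero.mp (by rw [← hC', hy, mul_zero] : y2 * x1 = 0) with h | h
          · exact h
          · exact absurd h hx
        rw [h3, h2']
        ring
      · exact mul_right_cancel₀ (mul_ne_zero hx hy) key
  simp only [Fm]
  linear_combination hB - hD

/-- The model has cardinality `p ^ 6`. -/
lemma card_M : Nat.card (M p) = p ^ 6 := by
  have e : M p ≃ (ZMod p × ZMod p × ZMod p × ZMod p × ZMod p × ZMod p) :=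
    { toFun := fun x => (x.i, x.j, x.k, x.l, x.m, x.n)
      invFun := fun t => ⟨t.1, t.2.1, t.2.2.1, t.2.2.2.1, t.2.2.2.2.1, t.2.2.2.2.2⟩
      left_inv := fun x => rfl
      right_inv := fun t => rfl }
  rw [Nat.card_congr e]
  simp only [Nat.card_prod, Nat.card_zmod]
  ring

end Model

/-! ### The quotient map `ℤ → ℚ/ℤ` sending `1` to `1/p`. -/

section Iota
variable (p : ℕ)

/-- `ℤ →+ ℚ/ℤ`, `n ↦ n/p`. -/
noncomputable def psi : ℤ →+ QZ :=
  (QuotientAddGroup.mk' (AddSubgroup.zmultiples (1 : ℚ))).comp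
    (zmultiplesHom ℚ ((1 : ℚ) / p))

variable [Fact p.Prime]

lemma psi_p : psi p (p : ℤ) = 0 := by
  have hp : (p : ℚ) ≠ 0 := by
    exact_mod_cast (Fact.out : p.Prime).ne_zero
  simp only [psi, AddMonoidHom.comp_apply, zmultiplesHom_apply]
  rw [QuotientAddGroup.mk'_apply, QuotientAddGroup.eq_zero_iff]
  have : ((p : ℤ) : ℚ) • ((1 : ℚ) / p) = 1 := by
    push_cast
    rw [smul_eq_mul]
    field_simp
  rw [zsmul_eq_mul]
  push_cast
  rw [show (p : ℚ) * (1 / (p : ℚ)) = 1 by field_simp]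
  exact AddSubgroup.mem_zmultiples 1

/-- `ZMod p →+ ℚ/ℤ`, `k ↦ k/p`. -/
noncomputable def iota : ZMod p →+ QZ :=
  ZMod.lift p ⟨psi p, psi_p p⟩

lemma iota_one_ne : iota p (1 : ZMod p) ≠ 0 := by
  intro h
  have h1 : iota p ((1 : ℤ) : ZMod p) = psi p 1 := ZMod.lift_coe p _ 1
  rw [show ((1 : ℤ) : ZMod p) = 1 by push_cast; ring] at h1
  rw [h, psi] at h1
  simp only [AddMonoidHom.comp_apply, zmultiplesHom_apply, one_zsmul,
    QuotientAddGroup.mk'_apply] at h1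
  have h2 : ((1 : ℚ) / p) ∈ AddSubgroup.zmultiples (1 : ℚ) := by
    rwa [eq_comm, QuotientAddGroup.eq_zero_iff] at h1
  rw [AddSubgroup.mem_zmultiples_iff] at h2
  obtain ⟨k, hk⟩ := h2
  rw [zsmul_eq_mul, mul_one] at hk
  have hp0 : (p : ℚ) ≠ 0 := by exact_mod_cast (Fact.out : p.Prime).ne_zero
  have : ((k * p : ℤ) : ℚ) = 1 := by push_cast; rw [hk]; field_simp
  have hkp : (k * p : ℤ) = 1 := by exact_mod_cast this
  have : (p : ℤ) ∣ 1 := ⟨k, by linarith⟩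
  have h5 := Int.le_of_dvd one_pos this
  have hp2 : 2 ≤ p := (Fact.out : p.Prime).two_le
  have : (2 : ℤ) ≤ (p : ℤ) := by exact_mod_cast hp2
  omega

end Iota

/-! ### Symmetric cocycles on abelian groups are coboundaries. -/

open CategoryTheory in
lemma coboundary_of_symm {H : Type} [Group H] (hcomm : ∀ x y : H, x * y = y * x)
    (f : H → H → QZ) (hc : IsTwoCocycle f) (hs : ∀ x y : H, f x y = f y x) :
    IsTwoCoboundary f := by
  classical
  have h1y : ∀ y : H, f 1 y = f 1 1 := by
    intro y
    have h := hc 1 1 y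
    rw [one_mul, one_mul] at h
    have h2 : f 1 y - f 1 1 = 0 := by rw [← h]; abel
    rwa [sub_eq_zero] at h2
  have hx1 : ∀ x : H, f x 1 = f 1 1 := by
    intro x
    have h := hc x 1 1
    rw [mul_one, mul_one] at h
    rw [h1y 1] at h
    have h2 : f 1 1 - f x 1 = 0 := by rw [← h]; abel
    have h3 := sub_eq_zero.mp h2
    exact h3.symm
  -- twisted product group structure on QZ × H
  letI : Add (QZ × H) := ⟨fun a b => (a.1 + b.1 + f a.2 b.2, a.2 * b.2)⟩
  letI : Zero (QZ × H) := ⟨(-(f 1 1), 1)⟩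
  letI : Neg (QZ × H) := ⟨fun a => (-(f 1 1) - a.1 - f a.2⁻¹ a.2, a.2⁻¹)⟩
  have add_def : ∀ a b : QZ × H, a + b = (a.1 + b.1 + f a.2 b.2, a.2 * b.2) := fun _ _ => rfl
  have zero_def : (0 : QZ × H) = (-(f 1 1), 1) := rfl
  have neg_def : ∀ a : QZ × H, -a = (-(f 1 1) - a.1 - f a.2⁻¹ a.2, a.2⁻¹) := fun _ => rfl
  letI grp : AddGroup (QZ × H) :=
    AddGroup.ofLeftAxioms
      (by
        intro a b c
        obtain ⟨a1, a2⟩ := a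
        obtain ⟨b1, b2⟩ := b
        obtain ⟨c1, c2⟩ := c
        simp only [add_def, Prod.mk.injEq]
        refine ⟨?_, (mul_assoc _ _ _)⟩
        have h := hc a2 b2 c2
        have h' : -(f b2 c2 - f (a2 * b2) c2 + f a2 (b2 * c2) - f a2 b2) = 0 := by
          rw [h, neg_zero]
        rw [← sub_eq_zero, ← h']
        abel)
      (by
        intro a
        obtain ⟨a1, a2⟩ := a
        simp only [zero_def, add_def, Prod.mk.injEq]
        refine ⟨?_, one_mul _⟩
        rw [h1y a2]
        abel)
      (by
        intro a
        obtain ⟨a1, a2⟩ := a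
        simp only [neg_def, add_def, zero_def, Prod.mk.injEq]
        exact ⟨by abel, inv_mul_cancel _⟩)
  letI : AddCommGroup (QZ × H) :=
    { grp with
      add_comm := by
        intro a b
        obtain ⟨a1, a2⟩ := a
        obtain ⟨b1, b2⟩ := b
        simp only [add_def, Prod.mk.injEq]
        exact ⟨by rw [hs a2 b2]; abel, hcomm _ _⟩ }
  -- the inclusion of QZ
  let iH : QZ →+ (QZ × H) :=
    AddMonoidHom.mk' (fun q => (q - (f 1 1), 1)) (by
      intro q r
      show ((q + r - (f 1 1), 1) : QZ × H) = (q - (f 1 1), 1) + (r - (f 1 1), 1)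
      have h : ((q + r - (f 1 1), 1) : QZ × H) = ((q - (f 1 1)) + (r - (f 1 1)) + f 1 1, 1 * 1) := by
        rw [h1y 1]
        exact Prod.ext_iff.mpr ⟨by abel, (one_mul 1).symm⟩
      exact h.trans rfl)
  have iH_inj : Function.Injective iH := by
    intro q r h
    have h1 : q - (f 1 1) = r - (f 1 1) := congrArg Prod.fst h
    simpa using h1
  -- retraction via injectivity of QZ
  haveI hdiv : DivisibleBy QZ ℤ := inferInstance
  haveI hinj : Injective (AddCommGrpCat.of QZ) := AddCommGrpCat.injective_of_divisible QZ
  let iC : AddCommGrpCat.of QZ ⟶ AddCommGrpCat.of (QZ × H) := AddCommGrpCat.ofHom iH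
  haveI : Mono iC := (AddCommGrpCat.mono_iff_injective _).mpr iH_inj
  let r : AddCommGrpCat.of (QZ × H) ⟶ AddCommGrpCat.of QZ :=
    Injective.factorThru (𝟙 (AddCommGrpCat.of QZ)) iC
  have hr : ∀ q : QZ, r.hom (iH q) = q := by
    intro q
    have h := Injective.comp_factorThru (𝟙 (AddCommGrpCat.of QZ)) iC
    have h2 := congrArg (fun m => m.hom q) h
    exact h2
  -- extract the coboundary
  let rr : (QZ × H) →+ QZ := r.hom
  have hr' : ∀ q : QZ, rr (iH q) = q := hr
  refine ⟨fun x => rr (0, x), ?_⟩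
  intro g h
  have hsplit : ((0, g) : QZ × H) + (0, h) = iH (f g h) + (0, g * h) := by
    have hL : ((0, g) : QZ × H) + (0, h) = ((0 : QZ) + 0 + f g h, g * h) := rfl
    have hR : iH (f g h) + ((0, g * h) : QZ × H)
        = ((f g h - (f 1 1)) + 0 + f 1 (g * h), 1 * (g * h)) := rfl
    rw [hL, hR, h1y (g * h), one_mul]
    refine Prod.ext_iff.mpr ⟨?_, rfl⟩
    show (0 : QZ) + 0 + f g h = f g h - f 1 1 + 0 + f 1 1
    abel
  have hmap := congrArg rr hsplit
  rw [map_add, map_add, hr'] at hmap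
  -- hmap : rr (0,g) + rr (0,h) = f g h + rr (0, g*h)
  rw [← sub_eq_zero]
  have h0 : (rr ((0 : QZ), g) + rr ((0 : QZ), h))
      - (f g h + rr ((0 : QZ), g * h)) = 0 := sub_eq_zero.mpr hmap
  have h1 : f g h - (rr ((0 : QZ), h) - rr ((0 : QZ), g * h) + rr ((0 : QZ), g))
      = -((rr ((0 : QZ), g) + rr ((0 : QZ), h))
      - (f g h + rr ((0 : QZ), g * h))) := by abel
  rw [h1, h0, neg_zero]

/-! ### Main theorem. -/

theorem bogomolov_nontrivial_Phi18 (p : ℕ) (hp : p.Prime) (h3 : 3 < p)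
    (hcard : Nat.card (PresentedGroup (rels p)) = p ^ 6) :
    BogomolovMultiplierIsNontrivial (PresentedGroup (rels p)) := by
  haveI : Fact p.Prime := ⟨hp⟩
  haveI : Fact (3 < p) := ⟨h3⟩
  haveI : NeZero p := ⟨hp.ne_zero⟩
  set G := PresentedGroup (rels p) with hG
  -- the isomorphism with the model
  let φ : G →* M p := PresentedGroup.toGroup (rels_hold (p := p))
  have hφof : ∀ x : Gen, φ (PresentedGroup.of x) = gg x := fun x => PresentedGroup.toGroup.of _
  have combo : ∀ a b c d : ZMod p,
      iota p a - iota p b + iota p c - iota p d = iota p (a - b + c - d) := by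
    intro a b c d
    simp only [map_sub, map_add]
  have hsurj : Function.Surjective φ := by
    intro v
    refine ⟨(PresentedGroup.of Gen.a) ^ v.i.val * (PresentedGroup.of Gen.b) ^ v.j.val *
      (PresentedGroup.of Gen.a1) ^ v.k.val * (PresentedGroup.of Gen.a2) ^ v.l.val *
      (PresentedGroup.of Gen.a3) ^ v.m.val * (PresentedGroup.of Gen.g) ^ v.n.val, ?_⟩
    simp only [_root_.map_mul, _root_.map_pow, hφof]
    show gg Gen.a ^ v.i.val * gg Gen.b ^ v.j.val * gg Gen.a1 ^ v.k.val *
      gg Gen.a2 ^ v.l.val * gg Gen.a3 ^ v.m.val * gg Gen.g ^ v.n.val = v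
    simp only [gg]
    rw [powA, powB, powA1, powA2, powA3, powG]
    have hi : ∀ x : ZMod p, ((x.val : ℕ) : ZMod p) = x := fun x => ZMod.natCast_rightInverse x
    simp only [hi]
    obtain ⟨i,j,k,l,m,n⟩ := v
    simp only [mul_def, M.mk.injEq]
    exact ⟨by ring, by ring, by ring, by ring, by ring, by ring⟩
  haveI hfin : Finite G := by
    have hpos : 0 < Nat.card G := by rw [hcard]; exact pow_pos hp.pos 6
    exact (Nat.card_pos_iff.mp hpos).2
  have hbij : Function.Bijective φ := by
    rw [Nat.bijective_iff_surjective_and_card]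
    exact ⟨hsurj, by rw [hcard, card_M]⟩
  let e : G ≃ M p := Equiv.ofBijective φ hbij
  have hesymm : ∀ v : M p, φ (e.symm v) = v := fun v => e.apply_symm_apply v
  have hesymm_mul : ∀ v w : M p, e.symm (v * w) = e.symm v * e.symm w := by
    intro v w
    apply hbij.1
    rw [_root_.map_mul φ (e.symm v) (e.symm w), hesymm, hesymm, hesymm]
  -- the cocycle
  refine ⟨fun g h => iota p (Fm (φ g) (φ h)), ?_, ?_, ?_⟩
  · -- cocycle
    intro g h j
    simp only [_root_.map_mul]
    rw [combo, Fm_cocycle, map_zero]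
  · -- restriction to bicyclic subgroups
    intro A hA
    apply coboundary_of_symm hA.1
    · intro g h j
      have hgh : φ ((g * h : ↥A) : G) = φ (g : G) * φ (h : G) := by
        rw [show ((g * h : ↥A) : G) = (g : G) * (h : G) from rfl, _root_.map_mul]
      have hhj : φ ((h * j : ↥A) : G) = φ (h : G) * φ (j : G) := by
        rw [show ((h * j : ↥A) : G) = (h : G) * (j : G) from rfl, _root_.map_mul]
      show iota p (Fm (φ ((h : G))) (φ ((j : G))))
          - iota p (Fm (φ (((g * h : ↥A) : G))) (φ ((j : G))))
          + iota p (Fm (φ ((g : G))) (φ (((h * j : ↥A) : G))))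
          - iota p (Fm (φ ((g : G))) (φ ((h : G)))) = 0
      rw [hgh, hhj, combo, Fm_cocycle, map_zero]
    · intro x y
      show iota p (Fm (φ (x : G)) (φ (y : G))) = iota p (Fm (φ (y : G)) (φ (x : G)))
      congr 1
      apply Fm_symm
      have hxy : (x : G) * (y : G) = (y : G) * (x : G) := by
        have h := hA.1 x y
        exact congrArg (Subtype.val) h
      rw [← _root_.map_mul, ← _root_.map_mul, hxy]
  · -- not a coboundary
    rintro ⟨cP, hcP⟩
    set cM : M p → QZ := fun v => cP (e.symm v) with hcM
    have key : ∀ v w : M p, iota p (Fm v w) = cM w - cM (v * w) + cM v := by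
      intro v w
      have h : iota p (Fm (φ (e.symm v)) (φ (e.symm w)))
          = cP (e.symm w) - cP (e.symm v * e.symm w) + cP (e.symm v) :=
        hcP (e.symm v) (e.symm w)
      rw [hesymm, hesymm, ← hesymm_mul] at h
      exact h
    -- the six equations
    have e1 := key ⟨0,0,0,1,0,0⟩ ⟨1,0,0,0,0,0⟩
    have e2 := key ⟨1,0,0,0,0,0⟩ ⟨0,0,0,1,0,0⟩
    have e3 := key ⟨1,0,0,1,0,0⟩ ⟨0,0,0,0,1,0⟩
    have e4 := key ⟨0,0,1,0,0,0⟩ ⟨0,1,0,0,0,0⟩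
    have e5 := key ⟨0,1,0,0,0,0⟩ ⟨0,0,1,0,0,0⟩
    have e6 := key ⟨0,1,1,0,0,0⟩ ⟨0,0,0,0,1,0⟩
    have hFm1 : Fm (⟨0,0,0,1,0,0⟩ : M p) ⟨1,0,0,0,0,0⟩ = 1 := by simp [Fm]
    have hFm2 : Fm (⟨1,0,0,0,0,0⟩ : M p) ⟨0,0,0,1,0,0⟩ = 0 := by simp [Fm]
    have hFm3 : Fm (⟨1,0,0,1,0,0⟩ : M p) ⟨0,0,0,0,1,0⟩ = 0 := by simp [Fm]
    have hFm4 : Fm (⟨0,0,1,0,0,0⟩ : M p) ⟨0,1,0,0,0,0⟩ = 0 := by simp [Fm]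
    have hFm5 : Fm (⟨0,1,0,0,0,0⟩ : M p) ⟨0,0,1,0,0,0⟩ = 0 := by simp [Fm]
    have hFm6 : Fm (⟨0,1,1,0,0,0⟩ : M p) ⟨0,0,0,0,1,0⟩ = 0 := by simp [Fm]
    have hm1 : (⟨0,0,0,1,0,0⟩ : M p) * ⟨1,0,0,0,0,0⟩ = ⟨1,0,0,1,1,0⟩ := by
      simp only [mul_def, M.mk.injEq]; norm_num
    have hm2 : (⟨1,0,0,0,0,0⟩ : M p) * ⟨0,0,0,1,0,0⟩ = ⟨1,0,0,1,0,0⟩ := by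
      simp only [mul_def, M.mk.injEq]; norm_num
    have hm3 : (⟨1,0,0,1,0,0⟩ : M p) * ⟨0,0,0,0,1,0⟩ = ⟨1,0,0,1,1,0⟩ := by
      simp only [mul_def, M.mk.injEq]; norm_num
    have hm4 : (⟨0,0,1,0,0,0⟩ : M p) * ⟨0,1,0,0,0,0⟩ = ⟨0,1,1,0,1,0⟩ := by
      simp only [mul_def, M.mk.injEq]; norm_num
    have hm5 : (⟨0,1,0,0,0,0⟩ : M p) * ⟨0,0,1,0,0,0⟩ = ⟨0,1,1,0,0,0⟩ := by
      simp only [mul_def, M.mk.injEq]; norm_num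
    have hm6 : (⟨0,1,1,0,0,0⟩ : M p) * ⟨0,0,0,0,1,0⟩ = ⟨0,1,1,0,1,0⟩ := by
      simp only [mul_def, M.mk.injEq]; norm_num
    rw [hFm1, hm1] at e1
    rw [hFm2, hm2, map_zero] at e2
    rw [hFm3, hm3, map_zero] at e3
    rw [hFm4, hm4, map_zero] at e4
    rw [hFm5, hm5, map_zero] at e5
    rw [hFm6, hm6, map_zero] at e6
    exact iota_one_ne p (by linear_combination (norm := abel) e1 - e2 - e3 - e4 + e5 + e6)

end Stmt18
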